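/- Let n₁ ≥ n₂ ≥ 1 and n = n₁+n₂. Work in the polynomial ring over ℚ in the indeterminates κ, t_{kl} (1 ≤ k,l ≤ n), u_{1,i}, u_{2,i} (1 ≤ i ≤ n₁), v_{1,j}, v_{2,j} (1 ≤ j ≤ n₂). Set τ₁₁ = Σ_{1≤i,j≤n₁} t_{ij}u_{1,i}u_{2,j}, τ₂₂ = Σ_{1≤i,j≤n₂} t_{n₁+i,n₁+j}v_{1,i}v_{2,j}, τ₁₂ = Σ_{1≤i≤n₁,1≤j≤n₂} t_{i,n₁+j}u_{1,i}v_{2,j}, τ₂₁ = Σ_{1≤i≤n₁,1≤j≤n₂} t_{n₁+j,i}v_{1,j}u_{2,i}, and f = 1 − τ₁₂ − τ₂₁ + (1/4)(τ₁₂−τ₂₁)² + τ₁₁τ₂₂. Then for every pair (i,j) with either 1 ≤ i,j ≤ n₁ or n₁ < i,j ≤ n, the polynomial identity κ·f·(∂f/∂t_{ij}) + (1/2 − κ)·Σ_{k,l=1}^n t_{kl}·(∂f/∂t_{il})·(∂f/∂t_{kj}) + f·Σ_{k,l=1}^n t_{kl}·(∂²f/∂t_{il}∂t_{kj}) = 0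 holds. Equivalently, the function f^{3/2−κ} is annihilated by the mixed Laplacian D_{ij}^{(κ)} = κ·∂/∂t_{ij} + Σ_{k,l=1}^n t_{kl}·∂²/(∂t_{il}∂t_{kj}) for all (i,j) in the two diagonal blocks determined by (n₁,n₂), wherever f^{3/2−κ} is defined. -/
import Mathlib


open MvPolynomial

/-- The indeterminates: `Sum.inl ()` is `κ`; then the `t_{kl}` (`1 ≤ k,l ≤ n₁+n₂`); then
the `u_{1,i}, u_{2,i}` (`Bool × Fin n₁`, `false ↦ u₁`, `true ↦ u₂`); then the
`v_{1,j}, v_{2,j}` (`Bool × Fin n₂`). -/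
abbrev HVars (n₁ n₂ : ℕ) : Type :=
  Unit ⊕ (Fin (n₁ + n₂) × Fin (n₁ + n₂)) ⊕ (Bool × Fin n₁) ⊕ (Bool × Fin n₂)

/-- The variable `κ`. -/
noncomputable def kv (n₁ n₂ : ℕ) : MvPolynomial (HVars n₁ n₂) ℚ := X (Sum.inl ())

/-- The variable `t_{ij}`. -/
noncomputable def tv (n₁ n₂ : ℕ) (i j : Fin (n₁ + n₂)) : MvPolynomial (HVars n₁ n₂) ℚ :=
  X (Sum.inr (Sum.inl (i, j)))

/-- The variables `u_{1,i}` (`s = false`) and `u_{2,i}` (`s = true`). -/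
noncomputable def uv (n₁ n₂ : ℕ) (s : Bool) (i : Fin n₁) : MvPolynomial (HVars n₁ n₂) ℚ :=
  X (Sum.inr (Sum.inr (Sum.inl (s, i))))

/-- The variables `v_{1,j}` (`s = false`) and `v_{2,j}` (`s = true`). -/
noncomputable def vv (n₁ n₂ : ℕ) (s : Bool) (j : Fin n₂) : MvPolynomial (HVars n₁ n₂) ℚ :=
  X (Sum.inr (Sum.inr (Sum.inr (s, j))))

/-- `τ₁₁ = Σ_{1≤i,j≤n₁} t_{ij}·u_{1,i}·u_{2,j}`. -/
noncomputable def tau11 (n₁ n₂ : ℕ) : MvPolynomial (HVars n₁ n₂) ℚ :=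
  ∑ i : Fin n₁, ∑ j : Fin n₁,
    tv n₁ n₂ (Fin.castAdd n₂ i) (Fin.castAdd n₂ j) * uv n₁ n₂ false i * uv n₁ n₂ true j

/-- `τ₂₂ = Σ_{1≤i,j≤n₂} t_{n₁+i,n₁+j}·v_{1,i}·v_{2,j}`. -/
noncomputable def tau22 (n₁ n₂ : ℕ) : MvPolynomial (HVars n₁ n₂) ℚ :=
  ∑ i : Fin n₂, ∑ j : Fin n₂,
    tv n₁ n₂ (Fin.natAdd n₁ i) (Fin.natAdd n₁ j) * vv n₁ n₂ false i * vv n₁ n₂ true j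

/-- `τ₁₂ = Σ_{1≤i≤n₁,1≤j≤n₂} t_{i,n₁+j}·u_{1,i}·v_{2,j}`. -/
noncomputable def tau12 (n₁ n₂ : ℕ) : MvPolynomial (HVars n₁ n₂) ℚ :=
  ∑ i : Fin n₁, ∑ j : Fin n₂,
    tv n₁ n₂ (Fin.castAdd n₂ i) (Fin.natAdd n₁ j) * uv n₁ n₂ false i * vv n₁ n₂ true j

/-- `τ₂₁ = Σ_{1≤i≤n₁,1≤j≤n₂} t_{n₁+j,i}·v_{1,j}·u_{2,i}`. -/
noncomputable def tau21 (n₁ n₂ : ℕ) : MvPolynomial (HVars n₁ n₂) ℚ :=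
  ∑ i : Fin n₁, ∑ j : Fin n₂,
    tv n₁ n₂ (Fin.natAdd n₁ j) (Fin.castAdd n₂ i) * vv n₁ n₂ false j * uv n₁ n₂ true i

/-- `f = 1 − τ₁₂ − τ₂₁ + (1/4)(τ₁₂−τ₂₁)² + τ₁₁τ₂₂`. -/
noncomputable def fHerm (n₁ n₂ : ℕ) : MvPolynomial (HVars n₁ n₂) ℚ :=
  1 - tau12 n₁ n₂ - tau21 n₁ n₂ +
    C (1 / 4 : ℚ) * (tau12 n₁ n₂ - tau21 n₁ n₂) ^ 2 + tau11 n₁ n₂ * tau22 n₁ n₂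

section Aux

open Finset

@[simp] lemma natAdd_inj' {m n : ℕ} {a b : Fin n} :
    Fin.natAdd m a = Fin.natAdd m b ↔ a = b := by simp [Fin.ext_iff]

@[simp] lemma castAdd_ne_natAdd' {m n : ℕ} {a : Fin m} {b : Fin n} :
    Fin.castAdd n a ≠ Fin.natAdd m b := by
  simp only [ne_eq, Fin.ext_iff, Fin.coe_castAdd, Fin.coe_natAdd]; omega

@[simp] lemma natAdd_ne_castAdd' {m n : ℕ} {a : Fin m} {b : Fin n} :
    Fin.natAdd m b ≠ Fin.castAdd n a := by
  simp only [ne_eq, Fin.ext_iff, Fin.coe_castAdd, Fin.coe_natAdd]; omega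

variable (n₁ n₂ : ℕ)

@[simp] lemma pdu (p : Fin (n₁+n₂) × Fin (n₁+n₂)) (s : Bool) (a : Fin n₁) :
    pderiv (Sum.inr (Sum.inl p)) (uv n₁ n₂ s a) = 0 := pderiv_X_of_ne (by simp)

@[simp] lemma pdv (p : Fin (n₁+n₂) × Fin (n₁+n₂)) (s : Bool) (a : Fin n₂) :
    pderiv (Sum.inr (Sum.inl p)) (vv n₁ n₂ s a) = 0 := pderiv_X_of_ne (by simp)

@[simp] lemma pd11 (a b : Fin n₁) :
    pderiv (Sum.inr (Sum.inl (Fin.castAdd n₂ a, Fin.castAdd n₂ b))) (tau11 n₁ n₂)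
      = uv n₁ n₂ false a * uv n₁ n₂ true b := by
  simp only [tau11, tv, uv, map_sum, pderiv_mul, pderiv_X, Pi.single_apply]
  simp [Prod.ext_iff, ite_and, eq_comm]

@[simp] lemma pd22 (a b : Fin n₂) :
    pderiv (Sum.inr (Sum.inl (Fin.natAdd n₁ a, Fin.natAdd n₁ b))) (tau22 n₁ n₂)
      = vv n₁ n₂ false a * vv n₁ n₂ true b := by
  simp only [tau22, tv, vv, map_sum, pderiv_mul, pderiv_X, Pi.single_apply]
  simp [Prod.ext_iff, ite_and, eq_comm]

@[simp] lemma pd12 (a : Fin n₁) (b : Fin n₂) :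
    pderiv (Sum.inr (Sum.inl (Fin.castAdd n₂ a, Fin.natAdd n₁ b))) (tau12 n₁ n₂)
      = uv n₁ n₂ false a * vv n₁ n₂ true b := by
  simp only [tau12, tv, uv, vv, map_sum, pderiv_mul, pderiv_X, Pi.single_apply]
  simp [Prod.ext_iff, ite_and, eq_comm]

@[simp] lemma pd21 (a : Fin n₂) (b : Fin n₁) :
    pderiv (Sum.inr (Sum.inl (Fin.natAdd n₁ a, Fin.castAdd n₂ b))) (tau21 n₁ n₂)
      = vv n₁ n₂ false a * uv n₁ n₂ true b := by
  simp only [tau21, tv, uv, vv, map_sum, pderiv_mul, pderiv_X, Pi.single_apply]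
  simp [Prod.ext_iff, ite_and, eq_comm]

@[simp] lemma pd11_na (a : Fin n₂) (q : Fin (n₁+n₂)) :
    pderiv (Sum.inr (Sum.inl (Fin.natAdd n₁ a, q))) (tau11 n₁ n₂) = 0 := by
  simp only [tau11, tv, uv, map_sum, pderiv_mul, pderiv_X, Pi.single_apply]
  simp [Prod.ext_iff]

@[simp] lemma pd11_na' (b : Fin n₂) (p : Fin (n₁+n₂)) :
    pderiv (Sum.inr (Sum.inl (p, Fin.natAdd n₁ b))) (tau11 n₁ n₂) = 0 := by
  simp only [tau11, tv, uv, map_sum, pderiv_mul, pderiv_X, Pi.single_apply]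
  simp [Prod.ext_iff]

@[simp] lemma pd22_ca (a : Fin n₁) (q : Fin (n₁+n₂)) :
    pderiv (Sum.inr (Sum.inl (Fin.castAdd n₂ a, q))) (tau22 n₁ n₂) = 0 := by
  simp only [tau22, tv, vv, map_sum, pderiv_mul, pderiv_X, Pi.single_apply]
  simp [Prod.ext_iff]

@[simp] lemma pd22_ca' (b : Fin n₁) (p : Fin (n₁+n₂)) :
    pderiv (Sum.inr (Sum.inl (p, Fin.castAdd n₂ b))) (tau22 n₁ n₂) = 0 := by
  simp only [tau22, tv, vv, map_sum, pderiv_mul, pderiv_X, Pi.single_apply]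
  simp [Prod.ext_iff]

@[simp] lemma pd12_na (a : Fin n₂) (q : Fin (n₁+n₂)) :
    pderiv (Sum.inr (Sum.inl (Fin.natAdd n₁ a, q))) (tau12 n₁ n₂) = 0 := by
  simp only [tau12, tv, uv, vv, map_sum, pderiv_mul, pderiv_X, Pi.single_apply]
  simp [Prod.ext_iff]

@[simp] lemma pd12_ca' (b : Fin n₁) (p : Fin (n₁+n₂)) :
    pderiv (Sum.inr (Sum.inl (p, Fin.castAdd n₂ b))) (tau12 n₁ n₂) = 0 := by
  simp only [tau12, tv, uv, vv, map_sum, pderiv_mul, pderiv_X, Pi.single_apply]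
  simp [Prod.ext_iff]

@[simp] lemma pd21_ca (a : Fin n₁) (q : Fin (n₁+n₂)) :
    pderiv (Sum.inr (Sum.inl (Fin.castAdd n₂ a, q))) (tau21 n₁ n₂) = 0 := by
  simp only [tau21, tv, uv, vv, map_sum, pderiv_mul, pderiv_X, Pi.single_apply]
  simp [Prod.ext_iff]

@[simp] lemma pd21_na' (b : Fin n₂) (p : Fin (n₁+n₂)) :
    pderiv (Sum.inr (Sum.inl (p, Fin.natAdd n₁ b))) (tau21 n₁ n₂) = 0 := by
  simp only [tau21, tv, uv, vv, map_sum, pderiv_mul, pderiv_X, Pi.single_apply]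
  simp [Prod.ext_iff]

lemma h42 : (C (1/4 : ℚ) * 2 : MvPolynomial (HVars n₁ n₂) ℚ) = C (1/2 : ℚ) := by
  rw [show (2 : MvPolynomial (HVars n₁ n₂) ℚ) = C 2 from (map_ofNat C 2).symm, ← C_mul]; norm_num

lemma dfcc (a b : Fin n₁) :
    pderiv (Sum.inr (Sum.inl (Fin.castAdd n₂ a, Fin.castAdd n₂ b))) (fHerm n₁ n₂)
      = tau22 n₁ n₂ * (uv n₁ n₂ false a * uv n₁ n₂ true b) := by
  simp only [fHerm, map_add, map_sub, pderiv_one, pderiv_C, pderiv_C_mul, pderiv_pow, pderiv_mul,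
    pd11, pd22_ca, pd12_ca', pd21_ca]
  ring

lemma dfnn (a b : Fin n₂) :
    pderiv (Sum.inr (Sum.inl (Fin.natAdd n₁ a, Fin.natAdd n₁ b))) (fHerm n₁ n₂)
      = tau11 n₁ n₂ * (vv n₁ n₂ false a * vv n₁ n₂ true b) := by
  simp only [fHerm, map_add, map_sub, pderiv_one, pderiv_C, pderiv_C_mul, pderiv_pow, pderiv_mul,
    pd22, pd11_na, pd12_na, pd21_na']
  ring

lemma dfcn (a : Fin n₁) (b : Fin n₂) :
    pderiv (Sum.inr (Sum.inl (Fin.castAdd n₂ a, Fin.natAdd n₁ b))) (fHerm n₁ n₂)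
      = (C (1/2 : ℚ) * (tau12 n₁ n₂ - tau21 n₁ n₂) - 1) * (uv n₁ n₂ false a * vv n₁ n₂ true b) := by
  simp only [fHerm, map_add, map_sub, pderiv_one, pderiv_C, pderiv_C_mul, pderiv_pow, pderiv_mul,
    pd12, pd11_na', pd22_ca, pd21_na']
  linear_combination (tau12 n₁ n₂ - tau21 n₁ n₂) * (uv n₁ n₂ false a * vv n₁ n₂ true b) * h42 n₁ n₂

lemma dfnc (a : Fin n₂) (b : Fin n₁) :
    pderiv (Sum.inr (Sum.inl (Fin.natAdd n₁ a, Fin.castAdd n₂ b))) (fHerm n₁ n₂)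
      = (-(C (1/2 : ℚ) * (tau12 n₁ n₂ - tau21 n₁ n₂)) - 1) * (vv n₁ n₂ false a * uv n₁ n₂ true b) := by
  simp only [fHerm, map_add, map_sub, pderiv_one, pderiv_C, pderiv_C_mul, pderiv_pow, pderiv_mul,
    pd21, pd11_na, pd12_na, pd22_ca']
  linear_combination (-(tau12 n₁ n₂ - tau21 n₁ n₂)) * (vv n₁ n₂ false a * uv n₁ n₂ true b) * h42 n₁ n₂

lemma collapse {M : Type*} [CommRing M] {α β : Type*} [Fintype α] [Fintype β]
    (g t : α → β → M) (c : M) (h : ∀ a b, g a b = c * t a b) :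
    ∑ a, ∑ b, g a b = c * ∑ a, ∑ b, t a b := by
  simp only [Finset.mul_sum]
  exact Finset.sum_congr rfl fun a _ => Finset.sum_congr rfl fun b _ => h a b

lemma hxy (n₁ n₂ : ℕ) :
    (C (1/2 : ℚ) - C (1/2 : ℚ) * C (1/2 : ℚ) - C (1/4 : ℚ) : MvPolynomial (HVars n₁ n₂) ℚ)
      = 0 := by
  rw [← C_mul, ← C_sub, ← C_sub]; norm_num

end Aux

/-- for every pair `(i,j)` in one of the two diagonal blocks determined by
`(n₁,n₂)`, the polynomial identity
`κ·f·∂_{ij}f + (1/2 − κ)·Σ_{k,l} t_{kl}·(∂_{il}f)·(∂_{kj}f) + f·Σ_{k,l} t_{kl}·∂_{il}∂_{kj}f = 0`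
holds; equivalently `f^{3/2−κ}` is annihilated by the mixed Laplacian `D_{ij}^{(κ)}`. -/


theorem stmt16 (n₁ n₂ : ℕ) (h21 : n₂ ≤ n₁) (h2 : 1 ≤ n₂)
    (i j : Fin (n₁ + n₂))
    (hij : (i.val < n₁ ∧ j.val < n₁) ∨ (n₁ ≤ i.val ∧ n₁ ≤ j.val)) :
    kv n₁ n₂ * fHerm n₁ n₂ * pderiv (Sum.inr (Sum.inl (i, j))) (fHerm n₁ n₂) +
      (C (1 / 2 : ℚ) - kv n₁ n₂) *
        ∑ k : Fin (n₁ + n₂), ∑ l : Fin (n₁ + n₂),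
          tv n₁ n₂ k l * pderiv (Sum.inr (Sum.inl (i, l))) (fHerm n₁ n₂) *
            pderiv (Sum.inr (Sum.inl (k, j))) (fHerm n₁ n₂) +
      fHerm n₁ n₂ *
        ∑ k : Fin (n₁ + n₂), ∑ l : Fin (n₁ + n₂),
          tv n₁ n₂ k l *
            pderiv (Sum.inr (Sum.inl (i, l)))
              (pderiv (Sum.inr (Sum.inl (k, j))) (fHerm n₁ n₂)) = 0 := by
  rcases hij with ⟨hi, hj⟩ | ⟨hi, hj⟩
  · obtain ⟨i₀, rfl⟩ : ∃ i₀ : Fin n₁, i = Fin.castAdd n₂ i₀ := ⟨⟨i.1, hi⟩, Fin.ext rfl⟩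
    obtain ⟨j₀, rfl⟩ : ∃ j₀ : Fin n₁, j = Fin.castAdd n₂ j₀ := ⟨⟨j.1, hj⟩, Fin.ext rfl⟩
    have hcc : (∑ x : Fin n₁, ∑ y : Fin n₁,
        tv n₁ n₂ (Fin.castAdd n₂ x) (Fin.castAdd n₂ y) *
          (tau22 n₁ n₂ * (uv n₁ n₂ false i₀ * uv n₁ n₂ true y)) *
          (tau22 n₁ n₂ * (uv n₁ n₂ false x * uv n₁ n₂ true j₀))) =
        tau22 n₁ n₂ * tau22 n₁ n₂ * (uv n₁ n₂ false i₀ * uv n₁ n₂ true j₀) * tau11 n₁ n₂ := by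
      rw [tau11]; refine collapse _ _ _ fun a b => by ring
    have hcn : (∑ x : Fin n₁, ∑ y : Fin n₂,
        tv n₁ n₂ (Fin.castAdd n₂ x) (Fin.natAdd n₁ y) *
          ((C (1/2 : ℚ) * (tau12 n₁ n₂ - tau21 n₁ n₂) - 1) * (uv n₁ n₂ false i₀ * vv n₁ n₂ true y)) *
          (tau22 n₁ n₂ * (uv n₁ n₂ false x * uv n₁ n₂ true j₀))) =
        (C (1/2 : ℚ) * (tau12 n₁ n₂ - tau21 n₁ n₂) - 1) * tau22 n₁ n₂ * (uv n₁ n₂ false i₀ * uv n₁ n₂ true j₀) * tau12 n₁ n₂ := by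
      rw [tau12]; refine collapse _ _ _ fun a b => by ring
    have hnc : (∑ x : Fin n₂, ∑ y : Fin n₁,
        tv n₁ n₂ (Fin.natAdd n₁ x) (Fin.castAdd n₂ y) *
          (tau22 n₁ n₂ * (uv n₁ n₂ false i₀ * uv n₁ n₂ true y)) *
          ((-(C (1/2 : ℚ) * (tau12 n₁ n₂ - tau21 n₁ n₂)) - 1) * (vv n₁ n₂ false x * uv n₁ n₂ true j₀))) =
        (-(C (1/2 : ℚ) * (tau12 n₁ n₂ - tau21 n₁ n₂)) - 1) * tau22 n₁ n₂ * (uv n₁ n₂ false i₀ * uv n₁ n₂ true j₀) * tau21 n₁ n₂ := by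
      conv_lhs => rw [Finset.sum_comm]
      rw [tau21]; refine collapse _ _ _ fun a b => by ring
    have hnn : (∑ x : Fin n₂, ∑ y : Fin n₂,
        tv n₁ n₂ (Fin.natAdd n₁ x) (Fin.natAdd n₁ y) *
          ((C (1/2 : ℚ) * (tau12 n₁ n₂ - tau21 n₁ n₂) - 1) * (uv n₁ n₂ false i₀ * vv n₁ n₂ true y)) *
          ((-(C (1/2 : ℚ) * (tau12 n₁ n₂ - tau21 n₁ n₂)) - 1) * (vv n₁ n₂ false x * uv n₁ n₂ true j₀))) =
        (C (1/2 : ℚ) * (tau12 n₁ n₂ - tau21 n₁ n₂) - 1) * (-(C (1/2 : ℚ) * (tau12 n₁ n₂ - tau21 n₁ n₂)) - 1) * (uv n₁ n₂ false i₀ * uv n₁ n₂ true j₀) * tau22 n₁ n₂ := by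
      rw [tau22]; refine collapse _ _ _ fun a b => by ring
    have hS2 : (∑ k : Fin (n₁ + n₂), ∑ l : Fin (n₁ + n₂),
        tv n₁ n₂ k l * pderiv (Sum.inr (Sum.inl (Fin.castAdd n₂ i₀, l))) (fHerm n₁ n₂) *
          pderiv (Sum.inr (Sum.inl (k, Fin.castAdd n₂ j₀))) (fHerm n₁ n₂)) =
        tau22 n₁ n₂ * tau22 n₁ n₂ * (uv n₁ n₂ false i₀ * uv n₁ n₂ true j₀) * tau11 n₁ n₂ +
        (C (1/2 : ℚ) * (tau12 n₁ n₂ - tau21 n₁ n₂) - 1) * tau22 n₁ n₂ * (uv n₁ n₂ false i₀ * uv n₁ n₂ true j₀) * tau12 n₁ n₂ +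
        (-(C (1/2 : ℚ) * (tau12 n₁ n₂ - tau21 n₁ n₂)) - 1) * tau22 n₁ n₂ * (uv n₁ n₂ false i₀ * uv n₁ n₂ true j₀) * tau21 n₁ n₂ +
        (C (1/2 : ℚ) * (tau12 n₁ n₂ - tau21 n₁ n₂) - 1) * (-(C (1/2 : ℚ) * (tau12 n₁ n₂ - tau21 n₁ n₂)) - 1) * (uv n₁ n₂ false i₀ * uv n₁ n₂ true j₀) * tau22 n₁ n₂ := by
      simp only [Fin.sum_univ_add, dfcc, dfcn, dfnc, dfnn, Finset.sum_add_distrib,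
        hcc, hcn, hnc, hnn]
      ring
    have hS3 : (∑ k : Fin (n₁ + n₂), ∑ l : Fin (n₁ + n₂),
        tv n₁ n₂ k l * pderiv (Sum.inr (Sum.inl (Fin.castAdd n₂ i₀, l)))
          (pderiv (Sum.inr (Sum.inl (k, Fin.castAdd n₂ j₀))) (fHerm n₁ n₂))) =
        (-(C (1/2 : ℚ)) * (uv n₁ n₂ false i₀ * uv n₁ n₂ true j₀)) * tau22 n₁ n₂ := by
      simp only [Fin.sum_univ_add, dfcc, dfcn, dfnc, dfnn, pderiv_mul, map_sub, map_neg,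
        pderiv_one, pderiv_C, pderiv_C_mul, pd11, pd22, pd12, pd21, pd11_na, pd11_na',
        pd22_ca, pd22_ca', pd12_na, pd12_ca', pd21_ca, pd21_na', pdu, pdv, mul_zero,
        zero_mul, add_zero, zero_add, sub_zero, zero_sub, neg_zero, mul_one, mul_neg,
        neg_mul, neg_neg, Finset.sum_const_zero]
      rw [tau22, ← neg_mul]; refine collapse _ _ _ fun a b => by ring
    rw [dfcc, hS2, hS3, fHerm]
    linear_combination ((C (1/2 : ℚ) - kv n₁ n₂) *
      (tau22 n₁ n₂ * (uv n₁ n₂ false i₀ * uv n₁ n₂ true j₀)) * (tau12 n₁ n₂ - tau21 n₁ n₂) ^ 2) * hxy n₁ n₂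
  · obtain ⟨i₀, rfl⟩ : ∃ i₀ : Fin n₂, i = Fin.natAdd n₁ i₀ :=
      ⟨⟨i.1 - n₁, by omega⟩, Fin.ext (by simp only [Fin.coe_natAdd]; omega)⟩
    obtain ⟨j₀, rfl⟩ : ∃ j₀ : Fin n₂, j = Fin.natAdd n₁ j₀ :=
      ⟨⟨j.1 - n₁, by omega⟩, Fin.ext (by simp only [Fin.coe_natAdd]; omega)⟩
    have hcc : (∑ x : Fin n₁, ∑ y : Fin n₁,
        tv n₁ n₂ (Fin.castAdd n₂ x) (Fin.castAdd n₂ y) *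
          ((-(C (1/2 : ℚ) * (tau12 n₁ n₂ - tau21 n₁ n₂)) - 1) * (vv n₁ n₂ false i₀ * uv n₁ n₂ true y)) *
          ((C (1/2 : ℚ) * (tau12 n₁ n₂ - tau21 n₁ n₂) - 1) * (uv n₁ n₂ false x * vv n₁ n₂ true j₀))) =
        (-(C (1/2 : ℚ) * (tau12 n₁ n₂ - tau21 n₁ n₂)) - 1) * (C (1/2 : ℚ) * (tau12 n₁ n₂ - tau21 n₁ n₂) - 1) * (vv n₁ n₂ false i₀ * vv n₁ n₂ true j₀) * tau11 n₁ n₂ := by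
      rw [tau11]; refine collapse _ _ _ fun a b => by ring
    have hcn : (∑ x : Fin n₁, ∑ y : Fin n₂,
        tv n₁ n₂ (Fin.castAdd n₂ x) (Fin.natAdd n₁ y) *
          (tau11 n₁ n₂ * (vv n₁ n₂ false i₀ * vv n₁ n₂ true y)) *
          ((C (1/2 : ℚ) * (tau12 n₁ n₂ - tau21 n₁ n₂) - 1) * (uv n₁ n₂ false x * vv n₁ n₂ true j₀))) =
        tau11 n₁ n₂ * (C (1/2 : ℚ) * (tau12 n₁ n₂ - tau21 n₁ n₂) - 1) * (vv n₁ n₂ false i₀ * vv n₁ n₂ true j₀) * tau12 n₁ n₂ := by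
      rw [tau12]; refine collapse _ _ _ fun a b => by ring
    have hnc : (∑ x : Fin n₂, ∑ y : Fin n₁,
        tv n₁ n₂ (Fin.natAdd n₁ x) (Fin.castAdd n₂ y) *
          ((-(C (1/2 : ℚ) * (tau12 n₁ n₂ - tau21 n₁ n₂)) - 1) * (vv n₁ n₂ false i₀ * uv n₁ n₂ true y)) *
          (tau11 n₁ n₂ * (vv n₁ n₂ false x * vv n₁ n₂ true j₀))) =
        (-(C (1/2 : ℚ) * (tau12 n₁ n₂ - tau21 n₁ n₂)) - 1) * tau11 n₁ n₂ * (vv n₁ n₂ false i₀ * vv n₁ n₂ true j₀) * tau21 n₁ n₂ := by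
      conv_lhs => rw [Finset.sum_comm]
      rw [tau21]; refine collapse _ _ _ fun a b => by ring
    have hnn : (∑ x : Fin n₂, ∑ y : Fin n₂,
        tv n₁ n₂ (Fin.natAdd n₁ x) (Fin.natAdd n₁ y) *
          (tau11 n₁ n₂ * (vv n₁ n₂ false i₀ * vv n₁ n₂ true y)) *
          (tau11 n₁ n₂ * (vv n₁ n₂ false x * vv n₁ n₂ true j₀))) =
        tau11 n₁ n₂ * tau11 n₁ n₂ * (vv n₁ n₂ false i₀ * vv n₁ n₂ true j₀) * tau22 n₁ n₂ := by
      rw [tau22]; refine collapse _ _ _ fun a b => by ring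
    have hS2 : (∑ k : Fin (n₁ + n₂), ∑ l : Fin (n₁ + n₂),
        tv n₁ n₂ k l * pderiv (Sum.inr (Sum.inl (Fin.natAdd n₁ i₀, l))) (fHerm n₁ n₂) *
          pderiv (Sum.inr (Sum.inl (k, Fin.natAdd n₁ j₀))) (fHerm n₁ n₂)) =
        (-(C (1/2 : ℚ) * (tau12 n₁ n₂ - tau21 n₁ n₂)) - 1) * (C (1/2 : ℚ) * (tau12 n₁ n₂ - tau21 n₁ n₂) - 1) * (vv n₁ n₂ false i₀ * vv n₁ n₂ true j₀) * tau11 n₁ n₂ +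
        tau11 n₁ n₂ * (C (1/2 : ℚ) * (tau12 n₁ n₂ - tau21 n₁ n₂) - 1) * (vv n₁ n₂ false i₀ * vv n₁ n₂ true j₀) * tau12 n₁ n₂ +
        (-(C (1/2 : ℚ) * (tau12 n₁ n₂ - tau21 n₁ n₂)) - 1) * tau11 n₁ n₂ * (vv n₁ n₂ false i₀ * vv n₁ n₂ true j₀) * tau21 n₁ n₂ +
        tau11 n₁ n₂ * tau11 n₁ n₂ * (vv n₁ n₂ false i₀ * vv n₁ n₂ true j₀) * tau22 n₁ n₂ := by
      simp only [Fin.sum_univ_add, dfcc, dfcn, dfnc, dfnn, Finset.sum_add_distrib,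
        hcc, hcn, hnc, hnn]
      ring
    have hS3 : (∑ k : Fin (n₁ + n₂), ∑ l : Fin (n₁ + n₂),
        tv n₁ n₂ k l * pderiv (Sum.inr (Sum.inl (Fin.natAdd n₁ i₀, l)))
          (pderiv (Sum.inr (Sum.inl (k, Fin.natAdd n₁ j₀))) (fHerm n₁ n₂))) =
        (-(C (1/2 : ℚ)) * (vv n₁ n₂ false i₀ * vv n₁ n₂ true j₀)) * tau11 n₁ n₂ := by
      simp only [Fin.sum_univ_add, dfcc, dfcn, dfnc, dfnn, pderiv_mul, map_sub, map_neg,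
        pderiv_one, pderiv_C, pderiv_C_mul, pd11, pd22, pd12, pd21, pd11_na, pd11_na',
        pd22_ca, pd22_ca', pd12_na, pd12_ca', pd21_ca, pd21_na', pdu, pdv, mul_zero,
        zero_mul, add_zero, zero_add, sub_zero, zero_sub, neg_zero, mul_one, mul_neg,
        neg_mul, neg_neg, Finset.sum_const_zero]
      rw [tau11, ← neg_mul]; refine collapse _ _ _ fun a b => by ring
    rw [dfnn, hS2, hS3, fHerm]
    linear_combination ((C (1/2 : ℚ) - kv n₁ n₂) *
      (tau11 n₁ n₂ * (vv n₁ n₂ false i₀ * vv n₁ n₂ true j₀)) * (tau12 n₁ n₂ - tau21 n₁ n₂) ^ 2) * hxy n₁ n₂
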